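/- Let C be a nonempty closed convex subset of a finite-dimensional real inner product space E, and let Φ : E → ℝ be differentiable with L-Lipschitz gradient. Fix η > 0, an initial point s¹ ∈ C, vectors g¹, …, gᵀ ∈ E, and define iterates s^{t+1} = P_C(s^t − η·g^t) for t = 1, …, T. Set δ^t = g^t − ∇Φ(s^t), Ĝ^t = (s^t − s^{t+1})/η, and G^t = (s^t − P_C(s^t − η·∇Φ(s^t)))/η. Then Σ_{t=1}^{T} (η − Lη²/2)·‖Ĝ^t‖² ≤ Φ(s¹) − Φ(s^{T+1}) + η·Σ_{t=1}^{T} (⟪δ^t, G^t⟫ + ‖δ^t‖²). -/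

import Mathlib

open RealInnerProductSpace

/-- Quadratic upper bound (descent lemma) for a function with Lipschitz gradient. -/
theorem descent_lemma_aux {E : Type*} [NormedAddCommGroup E] [InnerProductSpace ℝ E]
    [CompleteSpace E]
    (Φ : E → ℝ) (L : ℝ) (hΦ : Differentiable ℝ Φ)
    (hLip : ∀ x y, ‖gradient Φ x - gradient Φ y‖ ≤ L * ‖x - y‖) (x y : E) :
    Φ y ≤ Φ x + ⟪gradient Φ x, y - x⟫ + L / 2 * ‖y - x‖ ^ 2 := by
  set v := y - x with hv
  have hgc : Continuous (gradient Φ) := by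
    refine (LipschitzWith.of_dist_le_mul (K := Real.toNNReal L) fun a b => ?_).continuous
    rw [dist_eq_norm, dist_eq_norm]
    exact (hLip a b).trans (mul_le_mul_of_nonneg_right (Real.le_coe_toNNReal L) (norm_nonneg _))
  have hderiv : ∀ t : ℝ, HasDerivAt (fun u : ℝ => Φ (x + u • v))
      (⟪gradient Φ (x + t • v), v⟫) t := by
    intro t
    have h1 : HasDerivAt (fun u : ℝ => x + u • v) v t := by
      simpa using ((hasDerivAt_id t).smul_const v).const_add x
    have h2 := (hΦ (x + t • v)).hasGradientAt
    rw [hasGradientAt_iff_hasFDerivAt] at h2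
    have h3 := h2.comp_hasDerivAt t h1
    exact h3
  have hcont : Continuous fun t : ℝ => ⟪gradient Φ (x + t • v), v⟫ := by
    exact (hgc.comp (by continuity)).inner continuous_const
  have hint : Φ y - Φ x = ∫ t in (0:ℝ)..1, ⟪gradient Φ (x + t • v), v⟫ := by
    have := intervalIntegral.integral_eq_sub_of_hasDerivAt
      (f := fun u : ℝ => Φ (x + u • v)) (fun t _ => hderiv t)
      (hcont.intervalIntegrable 0 1)
    simpa [hv] using this.symm
  have hbound : ∫ t in (0:ℝ)..1, ⟪gradient Φ (x + t • v), v⟫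
      ≤ ∫ t in (0:ℝ)..1, (⟪gradient Φ x, v⟫ + L * ‖v‖ ^ 2 * t) := by
    apply intervalIntegral.integral_mono_on (by norm_num) (hcont.intervalIntegrable 0 1)
      (by apply Continuous.intervalIntegrable; continuity)
    intro t ht
    have h1 : ⟪gradient Φ (x + t • v) - gradient Φ x, v⟫ ≤ L * ‖v‖ ^ 2 * t := by
      have h2 := real_inner_le_norm (gradient Φ (x + t • v) - gradient Φ x) v
      have h3 := hLip (x + t • v) x
      have h4 : ‖x + t • v - x‖ = t * ‖v‖ := by
        rw [add_sub_cancel_left, norm_smul, Real.norm_eq_abs, abs_of_nonneg ht.1]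
      rw [h4] at h3
      nlinarith [norm_nonneg v, norm_nonneg (gradient Φ (x + t • v) - gradient Φ x)]
    rw [inner_sub_left] at h1
    linarith
  have hval : ∫ t in (0:ℝ)..1, (⟪gradient Φ x, v⟫ + L * ‖v‖ ^ 2 * t)
      = ⟪gradient Φ x, v⟫ + L / 2 * ‖v‖ ^ 2 := by
    rw [intervalIntegral.integral_add (intervalIntegrable_const)
      ((intervalIntegral.intervalIntegrable_id).const_mul _)]
    rw [intervalIntegral.integral_const_mul, integral_id]
    simp
    ring
  linarith [hint, hbound.trans_eq hval]

/-- Telescoping bound for projected (stochastic) gradient descent: with iterates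
`s^{t+1} = P_C(s^t − η g^t)`, `δ^t = g^t − ∇Φ(s^t)`, `Ĝ^t = (s^t − s^{t+1})/η`,
`G^t = (s^t − P_C(s^t − η ∇Φ(s^t)))/η`, one has
`Σ_{t=1}^{T} (η − Lη²/2)‖Ĝ^t‖² ≤ Φ(s¹) − Φ(s^{T+1}) + η Σ_{t=1}^{T} (⟪δ^t, G^t⟫ + ‖δ^t‖²)`. -/
theorem sum_descent_inequality_projected_sgd
    {E : Type*} [NormedAddCommGroup E] [InnerProductSpace ℝ E] [FiniteDimensional ℝ E]
    (C : Set E) (hCne : C.Nonempty) (hCcl : IsClosed C) (hCco : Convex ℝ C)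
    (proj : E → E)
    (hprojC : ∀ x, proj x ∈ C) (hproj : ∀ x, ∀ c ∈ C, ‖x - proj x‖ ≤ ‖x - c‖)
    (Φ : E → ℝ) (L : ℝ) (hΦ : Differentiable ℝ Φ)
    (hLip : ∀ x y, ‖gradient Φ x - gradient Φ y‖ ≤ L * ‖x - y‖)
    (η : ℝ) (hη : 0 < η) (T : ℕ)
    (s : ℕ → E) (g : ℕ → E)
    (hs1 : s 1 ∈ C)
    (hupdate : ∀ t ∈ Finset.Icc 1 T, s (t + 1) = proj (s t - η • g t)) :
    ∑ t ∈ Finset.Icc 1 T, (η - L * η ^ 2 / 2) * ‖η⁻¹ • (s t - s (t + 1))‖ ^ 2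
      ≤ Φ (s 1) - Φ (s (T + 1))
        + η * ∑ t ∈ Finset.Icc 1 T,
            (⟪g t - gradient Φ (s t), η⁻¹ • (s t - proj (s t - η • gradient Φ (s t)))⟫
              + ‖g t - gradient Φ (s t)‖ ^ 2) := by
  haveI : Nonempty C := hCne.to_subtype
  -- variational inequality for the projection
  have varineq : ∀ x : E, ∀ c ∈ C, ⟪x - proj x, c - proj x⟫ ≤ 0 := by
    intro x
    have heq : ‖x - proj x‖ = ⨅ w : C, ‖x - w‖ := by
      refine le_antisymm (le_ciInf fun w => hproj x w w.2) ?_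
      have hb : BddBelow (Set.range fun w : C => ‖x - (w : E)‖) := by
        refine ⟨0, ?_⟩
        rintro b ⟨w, rfl⟩
        positivity
      exact ciInf_le hb ⟨proj x, hprojC x⟩
    exact (norm_eq_iInf_iff_real_inner_le_zero hCco (hprojC x)).mp heq
  -- nonexpansiveness of the projection
  have nonexp : ∀ x y : E, ‖proj x - proj y‖ ≤ ‖x - y‖ := by
    intro x y
    have h1 := varineq x (proj y) (hprojC y)
    have h2 := varineq y (proj x) (hprojC x)
    have h3 := real_inner_le_norm (x - y) (proj x - proj y)
    have e1 : ⟪x - proj x, proj y - proj x⟫ = -⟪x - proj x, proj x - proj y⟫ := by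
      rw [← inner_neg_right]; congr 1; abel
    have e2 : ⟪x - y, proj x - proj y⟫
        = ⟪x - proj x, proj x - proj y⟫ - ⟪y - proj y, proj x - proj y⟫
          + ⟪proj x - proj y, proj x - proj y⟫ := by
      rw [← inner_sub_left, ← inner_add_left]; congr 1; abel
    rw [real_inner_self_eq_norm_sq] at e2
    rw [e1] at h1
    nlinarith [norm_nonneg (proj x - proj y), norm_nonneg (x - y)]
  -- membership of iterates
  have hmem : ∀ t, 1 ≤ t → t ≤ T → s t ∈ C := by
    intro t
    induction t with
    | zero => omega
    | succ n ih =>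
      intro _ h2
      rcases Nat.eq_zero_or_pos n with hn | hn
      · subst hn; exact hs1
      · rw [hupdate n (Finset.mem_Icc.mpr ⟨hn, by omega⟩)]
        exact hprojC _
  -- per-step inequality
  have step : ∀ t ∈ Finset.Icc 1 T,
      (η - L * η ^ 2 / 2) * ‖η⁻¹ • (s t - s (t + 1))‖ ^ 2
        ≤ (Φ (s t) - Φ (s (t + 1)))
          + η * (⟪g t - gradient Φ (s t),
                η⁻¹ • (s t - proj (s t - η • gradient Φ (s t)))⟫
              + ‖g t - gradient Φ (s t)‖ ^ 2) := by
    intro t ht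
    obtain ⟨ht1, ht2⟩ := Finset.mem_Icc.mp ht
    set x := s t with hx
    set gt := g t with hgt
    have hxC : x ∈ C := hmem t ht1 ht2
    have hp : s (t + 1) = proj (x - η • gt) := hupdate t ht
    set p := proj (x - η • gt) with hpdef
    set q := proj (x - η • gradient Φ x) with hqdef
    set δ := gt - gradient Φ x with hδ
    set v := x - p with hvdef
    -- descent lemma
    have h1 : Φ p ≤ Φ x - ⟪gradient Φ x, v⟫ + L / 2 * ‖v‖ ^ 2 := by
      have := descent_lemma_aux Φ L hΦ hLip x p
      have e : p - x = -v := by rw [hvdef]; abel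
      rw [e, inner_neg_right, norm_neg] at this
      linarith
    -- variational inequality at x - η g with c = x
    have h2 : ‖v‖ ^ 2 ≤ η * ⟪gt, v⟫ := by
      have hvi := varineq (x - η • gt) x hxC
      have e : x - η • gt - p = v - η • gt := by rw [hvdef]; abel
      rw [e, ← hvdef, inner_sub_left, real_inner_smul_left,
        real_inner_self_eq_norm_sq] at hvi
      linarith
    have h2' : η⁻¹ * ‖v‖ ^ 2 ≤ ⟪gt, v⟫ := by
      rw [inv_mul_le_iff₀ hη]; linarith
    -- comparison of the two projected points
    have h3 : ⟪δ, v⟫ ≤ ⟪δ, x - q⟫ + η * ‖δ‖ ^ 2 := by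
      have hne : ‖q - p‖ ≤ η * ‖δ‖ := by
        have := nonexp (x - η • gradient Φ x) (x - η • gt)
        have e : x - η • gradient Φ x - (x - η • gt) = η • δ := by
          rw [hδ, smul_sub]; abel
        rw [e, norm_smul, Real.norm_eq_abs, abs_of_pos hη] at this
        exact this
      have hi := real_inner_le_norm δ (q - p)
      have e : ⟪δ, v⟫ - ⟪δ, x - q⟫ = ⟪δ, q - p⟫ := by
        rw [← inner_sub_right]; congr 1; rw [hvdef]; abel
      nlinarith [norm_nonneg δ, norm_nonneg (q - p)]
    have h4 : ⟪gradient Φ x, v⟫ = ⟪gt, v⟫ - ⟪δ, v⟫ := by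
      rw [hδ, inner_sub_left]; ring
    -- assemble
    have hnorm : ‖η⁻¹ • v‖ = η⁻¹ * ‖v‖ := by
      rw [norm_smul, Real.norm_eq_abs, abs_of_pos (inv_pos.mpr hη)]
    have hinner : η * ⟪δ, η⁻¹ • (x - q)⟫ = ⟪δ, x - q⟫ := by
      rw [real_inner_smul_right]
      field_simp
    rw [hp, ← hvdef, hnorm]
    have hcoef : (η - L * η ^ 2 / 2) * (η⁻¹ * ‖v‖) ^ 2 = (η⁻¹ - L / 2) * ‖v‖ ^ 2 := by
      field_simp
    rw [hcoef, mul_add, hinner]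
    nlinarith [h1, h2', h3, h4]
  -- telescoping
  have htel' : ∀ (f : ℕ → ℝ) (n : ℕ),
      ∑ t ∈ Finset.Icc 1 n, (f t - f (t + 1)) = f 1 - f (n + 1) := by
    intro f n
    induction n with
    | zero => simp
    | succ m ih =>
      rw [Finset.sum_Icc_succ_top (by omega), ih]
      ring
  have htel := htel' (fun t => Φ (s t)) T
  calc ∑ t ∈ Finset.Icc 1 T, (η - L * η ^ 2 / 2) * ‖η⁻¹ • (s t - s (t + 1))‖ ^ 2
      ≤ ∑ t ∈ Finset.Icc 1 T, ((Φ (s t) - Φ (s (t + 1)))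
          + η * (⟪g t - gradient Φ (s t),
                η⁻¹ • (s t - proj (s t - η • gradient Φ (s t)))⟫
              + ‖g t - gradient Φ (s t)‖ ^ 2)) := Finset.sum_le_sum step
    _ = Φ (s 1) - Φ (s (T + 1))
        + η * ∑ t ∈ Finset.Icc 1 T,
            (⟪g t - gradient Φ (s t), η⁻¹ • (s t - proj (s t - η • gradient Φ (s t)))⟫
              + ‖g t - gradient Φ (s t)‖ ^ 2) := by
      rw [Finset.sum_add_distrib, htel, Finset.mul_sum]
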